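/- Let C be an abelian category in which some object I has the property that every ordinal-indexed (indexed by ordinals below a regular cardinal λ) strictly ascending chain of subobjects of I stabilizes before λ. If (X_α)_{α<λ} is a chain of objects with essential monomorphisms X_α → X_β for α ≤ β that is strictly increasing (no X_α → X_β is an isomorphism for α < β), and if λ is regular and large enough, then X₀ does not embed into I when I is injective. -/

import Mathlib

open CategoryTheory Limits

/-- `m : X ⟶ Y` is an essential monomorphism: it is monic and every nonzero subobject
`g : Z ⟶ Y` meets the image of `m` nontrivially. -/
def IsEssentialMono {A : Type*} [Category A] {X Y : A} (m : X ⟶ Y) : Prop :=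
  Mono m ∧ ∀ (Z : A) (g : Z ⟶ Y), Mono g → ¬ IsZero Z →
    ∃ (W : A) (u : W ⟶ Z) (v : W ⟶ X), Mono u ∧ ¬ IsZero W ∧ u ≫ g = v ≫ m

section ProofAux

universe v u

variable {C : Type u} [Category.{v} C]

lemma mono_of_meets [Abelian C] {Y B I : C} (t : Y ⟶ B) (g' : B ⟶ I)
    (hmeet : ∀ (Z : C) (gz : Z ⟶ B), Mono gz → ¬ IsZero Z →
      ∃ (W : C) (u : W ⟶ Z) (v : W ⟶ Y), Mono u ∧ ¬ IsZero W ∧ u ≫ gz = v ≫ t)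
    (hmono : Mono (t ≫ g')) : Mono g' := by
  apply CategoryTheory.Abelian.mono_of_kernel_ι_eq_zero
  by_contra hne
  have hker : ¬ IsZero (kernel g') := fun hz => hne (hz.eq_zero_of_src _)
  obtain ⟨W, u, v, hu, hW, huv⟩ := hmeet (kernel g') (kernel.ι g') inferInstance hker
  have hv : v ≫ (t ≫ g') = 0 := by
    rw [← Category.assoc, ← huv, Category.assoc, kernel.condition, comp_zero]
  have hv0 : v = 0 := zero_of_comp_mono _ hv
  have hui : u ≫ kernel.ι g' = 0 := by rw [huv, hv0, zero_comp]
  haveI := hu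
  exact hW (IsZero.of_mono_eq_zero _ hui)


lemma mono_colimit_desc {J : Type v} [SmallCategory J] [IsFiltered J]
    [HasColimitsOfShape J C] [PreservesFiniteLimits (colim (J := J) (C := C))]
    (F : J ⥤ C) (c : Cocone F) (hc : ∀ j, Mono (c.ι.app j)) : Mono (colimit.desc F c) := by
  haveI : ∀ j, Mono (c.ι.app j) := hc
  haveI : Mono c.ι := NatTrans.mono_of_mono_app c.ι
  haveI hm1 : Mono (colim.map c.ι) := colim.map_mono c.ι
  set G := (Functor.const J).obj c.pt with hG
  let cc : Cocone G := { pt := c.pt, ι := { app := fun _ => 𝟙 c.pt } }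
  let e : colimit G ⟶ c.pt := colimit.desc G cc
  have hsame : ∀ j j' : J, colimit.ι G j = colimit.ι G j' := by
    intro j j'
    have h1 := colimit.w G (IsFiltered.leftToMax j j')
    have h2 := colimit.w G (IsFiltered.rightToMax j j')
    rw [← h1, ← h2]
    rfl
  haveI : Nonempty J := IsFiltered.nonempty
  let j0 : J := Classical.arbitrary J
  haveI : IsIso e := by
    refine ⟨colimit.ι G j0, ?_, by simp [e, cc]⟩
    apply colimit.hom_ext; intro j
    have h : colimit.ι G j ≫ e = 𝟙 c.pt := by simp [e, cc]
    rw [← Category.assoc, h, Category.comp_id]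
    erw [Category.id_comp]
    exact (hsame j0 j)
  have hdesc : colimit.desc F c = colim.map c.ι ≫ e := by
    apply colimit.hom_ext; intro j
    simp [e, cc]
    erw [colimit.ι_desc]
    exact (Category.comp_id _).symm
  rw [hdesc]
  exact mono_comp _ _


lemma exists_extension [Abelian C] [HasColimits C] [AB5 C]
    {I : C} [Injective I]
    (X : Ordinal.{0} → C) (m : ∀ α β : Ordinal.{0}, α ≤ β → (X α ⟶ X β))
    (hid : ∀ α, m α α le_rfl = 𝟙 (X α))
    (hcomp : ∀ (α β γ : Ordinal.{0}) (h₁ : α ≤ β) (h₂ : β ≤ γ),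
      m α β h₁ ≫ m β γ h₂ = m α γ (h₁.trans h₂))
    (d : Ordinal.{0}) (hd : d ≠ 0)
    (hessd : ∀ β (h : β ≤ d), IsEssentialMono (m β d h))
    (g : ∀ β, β < d → (X β ⟶ I)) (hmono : ∀ β h, Mono (g β h))
    (hcompat : ∀ β γ (hbg : β ≤ γ) (hg : γ < d), m β γ hbg ≫ g γ hg = g β (hbg.trans_lt hg)) :
    ∃ g' : X d ⟶ I, Mono g' ∧ ∀ β (h : β < d), m β d h.le ≫ g' = g β h := by
  haveI hne : Nonempty d.ToType := Ordinal.nonempty_toType_iff.2 hd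
  let oi : d.ToType → Ordinal.{0} := fun b => ((Ordinal.ToType.mk (o := d)).symm b).1
  have oi_lt : ∀ b, oi b < d := fun b => ((Ordinal.ToType.mk (o := d)).symm b).2
  have oi_mono : ∀ {b b' : d.ToType}, b ≤ b' → oi b ≤ oi b' := fun h =>
    Subtype.coe_le_coe.2 ((Ordinal.ToType.mk (o := d)).symm.monotone h)
  let J := AsSmall.{v} d.ToType
  haveI : IsFiltered d.ToType := inferInstance
  haveI : IsFiltered J := IsFiltered.of_equivalence AsSmall.equiv
  let D : J ⥤ C :=
    { obj := fun j => X (oi (AsSmall.down.obj j))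
      map := fun {j k} f => m (oi (AsSmall.down.obj j)) (oi (AsSmall.down.obj k)) (oi_mono (leOfHom (AsSmall.down.map f)))
      map_id := fun j => hid _
      map_comp := fun f g => (hcomp _ _ _ _ _).symm }
  let ct : Cocone D :=
    { pt := X d
      ι := { app := fun j => m (oi (AsSmall.down.obj j)) d (oi_lt _).le
             naturality := fun j k f => by
               dsimp [D]; rw [Category.comp_id, hcomp] } }
  let ch : Cocone D :=
    { pt := I
      ι := { app := fun j => g (oi (AsSmall.down.obj j)) (oi_lt _)
             naturality := fun j k f => by
               dsimp [D]; rw [Category.comp_id, hcompat] } }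
  let t : colimit D ⟶ X d := colimit.desc D ct
  let h : colimit D ⟶ I := colimit.desc D ch
  haveI hmt : Mono t := mono_colimit_desc D ct (fun j => (hessd (oi (AsSmall.down.obj j)) (oi_lt _).le).1)
  haveI hmh : Mono h := mono_colimit_desc D ch (fun j => hmono _ _)
  obtain ⟨g', hg'⟩ := Injective.factors h t
  have hmeet : ∀ (Z : C) (gz : Z ⟶ X d), Mono gz → ¬ IsZero Z →
      ∃ (W : C) (u : W ⟶ Z) (v : W ⟶ colimit D), Mono u ∧ ¬ IsZero W ∧ u ≫ gz = v ≫ t := by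
    intro Z gz hgz hZ
    obtain ⟨b0⟩ := hne
    obtain ⟨W, u, v, hu, hW, huv⟩ := (hessd (oi b0) (oi_lt b0).le).2 Z gz hgz hZ
    refine ⟨W, u, v ≫ colimit.ι D (AsSmall.up.obj b0), hu, hW, ?_⟩
    erw [huv, Category.assoc]
    congr 1
    exact (colimit.ι_desc ct (AsSmall.up.obj b0)).symm
  refine ⟨g', mono_of_meets t g' hmeet (by rw [hg']; exact hmh), ?_⟩
  have key : ∀ (β : Ordinal) (h1 : β < d) (b : d.ToType), oi b = β →
      m β d h1.le ≫ g' = g β h1 := by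
    intro β h1 b hb
    subst hb
    have h2 : m (oi b) d (oi_lt b).le = colimit.ι D (AsSmall.up.obj b) ≫ t := (colimit.ι_desc ct (AsSmall.up.obj b)).symm
    erw [h2, Category.assoc, hg']
    exact colimit.ι_desc ch (AsSmall.up.obj b)
  intro β hβ
  exact key β hβ (Ordinal.ToType.mk (o := d) ⟨β, hβ⟩)
    (by simp [oi])

structure PartialFam {C : Type u} [Category.{v} C] (lam : Cardinal.{0}) (I : C)
    (X : Ordinal.{0} → C) (m : ∀ α β : Ordinal.{0}, α ≤ β → (X α ⟶ X β)) where
  dom : Ordinal.{0}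
  dom_le : dom ≤ lam.ord
  g : ∀ β, β < dom → (X β ⟶ I)
  mono : ∀ β h, Mono (g β h)
  compat : ∀ β γ (hbg : β ≤ γ) (hg : γ < dom), m β γ hbg ≫ g γ hg = g β (lt_of_le_of_lt hbg hg)

variable {C : Type u} [Category.{v} C] {lam : Cardinal.{0}} {I : C}
    {X : Ordinal.{0} → C} {m : ∀ α β : Ordinal.{0}, α ≤ β → (X α ⟶ X β)}

/-- The extension relation on partial families. -/
def PFle (p q : PartialFam lam I X m) : Prop :=
  p.dom ≤ q.dom ∧ ∀ β (hb : β < p.dom) (hb' : β < q.dom), q.g β hb' = p.g β hb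

theorem PFle_trans {p q s : PartialFam lam I X m} (h1 : PFle p q) (h2 : PFle q s) : PFle p s :=
  ⟨h1.1.trans h2.1, fun β hb hb' =>
    (h2.2 β (lt_of_lt_of_le hb h1.1) hb').trans (h1.2 β hb _)⟩

theorem PFle_chains_bounded (c : Set (PartialFam lam I X m)) (hc : IsChain PFle c) :
    ∃ ub, ∀ p ∈ c, PFle p ub := by
  classical
  have hbdd : BddAbove (PartialFam.dom '' c) := ⟨lam.ord, by rintro _ ⟨p, hp, rfl⟩; exact p.dom_le⟩
  have agree : ∀ p ∈ c, ∀ q ∈ c, ∀ β (h1 : β < PartialFam.dom p) (h2 : β < PartialFam.dom q),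
      p.g β h1 = q.g β h2 := by
    intro p hp q hq β h1 h2
    rcases eq_or_ne p q with rfl | hne
    · rfl
    rcases hc hp hq hne with h | h
    · exact (h.2 β h1 h2).symm
    · exact h.2 β h2 h1
  set dsup := sSup (PartialFam.dom '' c) with hdsup
  have hex : ∀ β, β < dsup → ∃ p, p ∈ c ∧ β < PartialFam.dom p := by
    intro β hb
    by_contra hnone
    push_neg at hnone
    rcases (PartialFam.dom '' c).eq_empty_or_nonempty with he | hne
    · rw [hdsup, he, csSup_empty] at hb
      exact (zero_le : (0 : Ordinal) ≤ β).not_gt hb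
    · have : dsup ≤ β := csSup_le hne (by rintro _ ⟨p, hp, rfl⟩; exact hnone p hp)
      exact absurd hb this.not_gt
  choose pick hpickc hpickd using hex
  refine ⟨⟨dsup, ?_, fun β hb => (pick β hb).g β (hpickd β hb), ?_, ?_⟩, ?_⟩
  · rcases (PartialFam.dom '' c).eq_empty_or_nonempty with he | hne
    · rw [hdsup, he, csSup_empty]; exact zero_le
    · exact csSup_le hne (by rintro _ ⟨p, hp, rfl⟩; exact p.dom_le)
  · intro β hb; exact (pick β hb).mono β _
  · intro β γ hbg hg
    have hβ : β < PartialFam.dom (pick γ hg) := lt_of_le_of_lt hbg (hpickd γ hg)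
    rw [(pick γ hg).compat β γ hbg (hpickd γ hg)]
    exact agree _ (hpickc γ hg) _ (hpickc β (lt_of_le_of_lt hbg hg)) β hβ _
  · intro p hp
    refine ⟨le_csSup hbdd ⟨p, hp, rfl⟩, fun β hb hb' => agree _ (hpickc β hb') _ hp β _ hb⟩

end ProofAux

/-- let `C` be a cocomplete (AB5) abelian category, `λ` a regular cardinal,
and `I` an object of `C` all of whose `< λ`-indexed ascending chains of subobjects
stabilize before `λ`.  If `(X_α)_{α<λ}` is a chain with essential monomorphisms
`X_α → X_β` (`α ≤ β`), none of which is an isomorphism for `α < β`, and `I` is injective,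
then `X₀ does not embed into `I`. -/
theorem base_of_long_essential_chain_does_not_embed
    {C : Type*} [Category C] [Abelian C] [HasColimits C] [AB5 C]
    (lam : Cardinal.{0}) (hreg : lam.IsRegular)
    (I : C)
    (hstab : ∀ s : Ordinal.{0} → Subobject I,
      (∀ α β : Ordinal.{0}, α ≤ β → β < lam.ord → s α ≤ s β) →
      ∃ α, α < lam.ord ∧ ∀ β, α ≤ β → β < lam.ord → s β = s α)
    (X : Ordinal.{0} → C) (m : ∀ α β : Ordinal.{0}, α ≤ β → (X α ⟶ X β))
    (hid : ∀ α, m α α le_rfl = 𝟙 (X α))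
    (hcomp : ∀ (α β γ : Ordinal.{0}) (h₁ : α ≤ β) (h₂ : β ≤ γ),
      m α β h₁ ≫ m β γ h₂ = m α γ (h₁.trans h₂))
    (hess : ∀ (α β : Ordinal.{0}) (h : α ≤ β), β < lam.ord → IsEssentialMono (m α β h))
    (hstrict : ∀ (α β : Ordinal.{0}) (h : α < β), β < lam.ord → ¬ IsIso (m α β h.le))
    (hI : Injective I) :
    ¬ ∃ f : X 0 ⟶ I, Mono f := by
  rintro ⟨f, hf⟩
  haveI := hI
  haveI := hf
  have hord : Order.IsSuccLimit lam.ord := Cardinal.isSuccLimit_ord hreg.aleph0_le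
  obtain ⟨M, hM⟩ := exists_maximal_of_chains_bounded
    (PFle_chains_bounded (lam := lam) (I := I) (X := X) (m := m)) (fun h1 h2 => PFle_trans h1 h2)
  -- step 1: M.dom = lam.ord
  have hdom : lam.ord ≤ M.dom := by
    by_contra hlt
    push_neg at hlt
    obtain ⟨g', hg'mono, hg'compat⟩ :
        ∃ g' : X M.dom ⟶ I, Mono g' ∧ ∀ β (h : β < M.dom), m β M.dom h.le ≫ g' = M.g β h := by
      rcases eq_or_ne M.dom 0 with h0 | h0
      · refine ⟨m M.dom 0 h0.le ≫ f, ?_, ?_⟩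
        · haveI : Mono (m M.dom 0 h0.le) := (hess M.dom 0 h0.le hord.pos).1
          exact mono_comp _ _
        · intro β h
          exact absurd (lt_of_lt_of_le h h0.le) (zero_le : (0 : Ordinal) ≤ β).not_gt
      · exact exists_extension X m hid hcomp M.dom h0 (fun β h => hess β M.dom h hlt)
          M.g M.mono M.compat
    have hsucc : M.dom + 1 ≤ lam.ord := by
      rw [Ordinal.add_one_eq_succ]
      exact (hord.succ_lt hlt).le
    have hltsucc : M.dom < M.dom + 1 := by
      rw [Ordinal.add_one_eq_succ]; exact Order.lt_succ _
    set e : PartialFam lam I X m :=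
      { dom := M.dom + 1
        dom_le := hsucc
        g := fun β hb => m β M.dom (by
            rw [Ordinal.add_one_eq_succ] at hb
            exact Order.lt_succ_iff.1 hb) ≫ g'
        mono := fun β hb => by
          have hble : β ≤ M.dom := by
            rw [Ordinal.add_one_eq_succ] at hb
            exact Order.lt_succ_iff.1 hb
          haveI : Mono (m β M.dom hble) := (hess β M.dom hble hlt).1
          exact mono_comp _ _
        compat := fun β γ hbg hg => by rw [← Category.assoc, hcomp] } with he
    have hMe : PFle M e := by
      refine ⟨hltsucc.le, fun β hb hb' => ?_⟩
      show m β M.dom _ ≫ g' = M.g β hb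
      exact hg'compat β hb
    have := (hM e hMe).1
    rw [he] at this
    exact absurd this hltsucc.not_ge
  -- step 2: strictly increasing chain of subobjects
  let gg : ∀ α, α < lam.ord → (X α ⟶ I) := fun α h => M.g α (lt_of_lt_of_le h hdom)
  have ggmono : ∀ α h, Mono (gg α h) := fun α h => M.mono α _
  let s : Ordinal.{0} → Subobject I := fun α =>
    if h : α < lam.ord then @Subobject.mk _ _ _ _ (gg α h) (ggmono α h) else ⊥
  have hmonos : ∀ α β, α ≤ β → β < lam.ord → s α ≤ s β := by
    intro α β hab hβ
    have hα : α < lam.ord := lt_of_le_of_lt hab hβ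
    show (if h : α < lam.ord then _ else _) ≤ (if h : β < lam.ord then _ else _)
    rw [dif_pos hα, dif_pos hβ]
    haveI := ggmono α hα; haveI := ggmono β hβ
    exact Subobject.mk_le_mk_of_comm (m α β hab) (M.compat α β hab _)
  obtain ⟨α0, hα0, hstable⟩ := hstab s hmonos
  have hβ1 : α0 + 1 < lam.ord := by
    rw [Ordinal.add_one_eq_succ]; exact hord.succ_lt hα0
  have hlt01 : α0 < α0 + 1 := by rw [Ordinal.add_one_eq_succ]; exact Order.lt_succ _
  have heq : s (α0 + 1) = s α0 := hstable _ hlt01.le hβ1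
  haveI := ggmono α0 hα0; haveI := ggmono (α0 + 1) hβ1
  rw [show s (α0+1) = Subobject.mk (gg (α0+1) hβ1) from dif_pos hβ1,
      show s α0 = Subobject.mk (gg α0 hα0) from dif_pos hα0] at heq
  let e := Subobject.isoOfMkEqMk (gg α0 hα0) (gg (α0 + 1) hβ1) heq.symm
  have hee : e.hom ≫ gg (α0 + 1) hβ1 = gg α0 hα0 := Subobject.ofMkLEMk_comp _
  have hmm : m α0 (α0 + 1) hlt01.le ≫ gg (α0 + 1) hβ1 = gg α0 hα0 := M.compat _ _ _ _
  have hiso : m α0 (α0 + 1) hlt01.le = e.hom := by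
    rw [← cancel_mono (gg (α0 + 1) hβ1), hmm, hee]
  have : IsIso (m α0 (α0 + 1) hlt01.le) := by rw [hiso]; infer_instance
  exact hstrict α0 (α0 + 1) hlt01 hβ1 this
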